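/- Let κ : ℝ → ℝ be differentiable and let c₁ > 0, κ₂ ≥ 0, L₁ ≥ 0 be such that: κ(t) ≥ c₁ for all t ≥ 0; the function f(t) = κ(t)·t is strongly monotone with constant c₁ on [0,∞), i.e., (f(t) − f(s))·(t − s) ≥ c₁·(t − s)² for all t, s ≥ 0; |κ′(t)| ≤ κ₂ for all t ≥ 0; and the function g(t) = κ′(t)·t satisfies |g(t) − g(s)| ≤ L₁·|t − s| for all t, s ≥ 0. Define κ_d(x) := κ′(|x|)·|x| + κ(|x|) and L₂ := κ₂ + L₁. Let N ≥ 2, c ≥ 0, b ∈ ℝ^N and z ∈ ℝ, let P be the N×N cyclic shift permutation matrix with entries P_{n,k} = 1 if k ≡ n − 1 (mod N) and 0 otherwise, and for U ∈ ℝ^N define the N×N matrix J(U) := diag(c + κ_d(U_n − b_n))_{n=0,…,N−1} − c·P. Set U⁰ := (z + b_0, …, z + b_{N−1}). Then J(U⁰) is invertible and for every U ∈ ℝ^N the affine covariant Lipschitz condition ‖J(U⁰)⁻¹·(J(U) − J(U⁰))‖₂ ≤ (L₂/c₁)·‖U − U⁰‖₂ holds, where ‖·‖₂ denotes the spectral norm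 of a matrix and the Euclidean norm of a vector. -/

import Mathlib

open Matrix

/-- The real `N×N` cyclic shift permutation matrix: `P n k = 1` if `k ≡ n − 1 (mod N)`,
else `0`. -/
def cyclicShiftMatrixR (N : ℕ) : Matrix (Fin N) (Fin N) ℝ :=
  Matrix.of fun n k => if ((k : ℕ) : ZMod N) = ((n : ℕ) : ZMod N) - 1 then 1 else 0

/-- Strong monotonicity of `t ↦ κ(t)·t` on `[0,∞)` forces its derivative to be `≥ c₁` there. -/
private lemma deriv_mul_add_lb (κ : ℝ → ℝ) (hκdiff : Differentiable ℝ κ) (c₁ : ℝ)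
    (hmono : ∀ t s : ℝ, 0 ≤ t → 0 ≤ s → (κ t * t - κ s * s) * (t - s) ≥ c₁ * (t - s) ^ 2) :
    ∀ t : ℝ, 0 ≤ t → c₁ ≤ deriv κ t * t + κ t := by
  intro t ht
  have hf : HasDerivAt (fun s => κ s * s) (deriv κ t * t + κ t) t := by
    have h := (hκdiff t).hasDerivAt.mul (hasDerivAt_id' t); rw [mul_one] at h; exact h
  have hslope := hasDerivAt_iff_tendsto_slope.mp hf
  have hslope' : Filter.Tendsto (slope (fun s => κ s * s) t) (nhdsWithin t (Set.Ioi t))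
      (nhds (deriv κ t * t + κ t)) :=
    hslope.mono_left (nhdsWithin_mono t fun s hs => ne_of_gt hs)
  refine ge_of_tendsto hslope' ?_
  filter_upwards [self_mem_nhdsWithin] with s hs
  have hst : 0 < s - t := sub_pos.mpr hs
  have h := hmono s t (le_of_lt (lt_of_le_of_lt ht hs)) ht
  rw [slope_def_field, le_div_iff₀ hst]
  nlinarith [h]

/-- The function `κ_d` is globally Lipschitz with constant `κ₂ + L₁`. -/
private lemma kd_lipschitz (κ : ℝ → ℝ) (hκdiff : Differentiable ℝ κ) (κ₂ L₁ : ℝ)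
    (hκ₂ : 0 ≤ κ₂) (hL₁ : 0 ≤ L₁)
    (hbd : ∀ t : ℝ, 0 ≤ t → |deriv κ t| ≤ κ₂)
    (hg : ∀ t s : ℝ, 0 ≤ t → 0 ≤ s → |deriv κ t * t - deriv κ s * s| ≤ L₁ * |t - s|)
    (κd : ℝ → ℝ) (hκd : ∀ x : ℝ, κd x = deriv κ |x| * |x| + κ |x|) :
    ∀ x y : ℝ, |κd x - κd y| ≤ (κ₂ + L₁) * |x - y| := by
  intro x y
  set p := |x| with hp
  set q := |y| with hq
  have hp0 : 0 ≤ p := abs_nonneg x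
  have hq0 : 0 ≤ q := abs_nonneg y
  have habs : |p - q| ≤ |x - y| := abs_abs_sub_abs_le_abs_sub x y
  have hκlip : |κ p - κ q| ≤ κ₂ * |p - q| := by
    have := Convex.norm_image_sub_le_of_norm_deriv_le (s := Set.Ici (0:ℝ))
      (fun t _ => hκdiff t) (fun t ht => by rw [Real.norm_eq_abs]; exact hbd t ht) (convex_Ici 0)
      (Set.mem_Ici.mpr hq0) (Set.mem_Ici.mpr hp0)
    simpa [Real.norm_eq_abs] using this
  have hglip : |deriv κ p * p - deriv κ q * q| ≤ L₁ * |p - q| := hg _ _ hp0 hq0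
  have h1 : |κd x - κd y| ≤ κ₂ * |p - q| + L₁ * |p - q| := by
    rw [hκd, hκd, ← hp, ← hq]
    calc |deriv κ p * p + κ p - (deriv κ q * q + κ q)|
        = |(deriv κ p * p - deriv κ q * q) + (κ p - κ q)| := by ring_nf
      _ ≤ |deriv κ p * p - deriv κ q * q| + |κ p - κ q| := abs_add_le _ _
      _ ≤ L₁ * |p - q| + κ₂ * |p - q| := add_le_add hglip hκlip
      _ = _ := by ring
  calc |κd x - κd y| ≤ κ₂ * |p - q| + L₁ * |p - q| := h1
    _ ≤ κ₂ * |x - y| + L₁ * |x - y| := add_le_add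
        (mul_le_mul_of_nonneg_left habs hκ₂) (mul_le_mul_of_nonneg_left habs hL₁)
    _ = (κ₂ + L₁) * |x - y| := by ring

/-- Coordinates are dominated by the Euclidean norm. -/
private lemma coord_le_norm {N : ℕ} (v : EuclideanSpace ℝ (Fin N)) (n : Fin N) : |v n| ≤ ‖v‖ := by
  rw [EuclideanSpace.norm_eq]
  calc |v n| = Real.sqrt (‖v n‖^2) := by rw [Real.norm_eq_abs, Real.sqrt_sq_eq_abs, abs_abs]
    _ ≤ _ := Real.sqrt_le_sqrt
        (Finset.single_le_sum (f := fun i => ‖v i‖^2) (fun i _ => sq_nonneg _) (Finset.mem_univ n))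

/-- affine covariant Lipschitz condition for the 1D model problem.
Under the assumptions on the nonlinearity `κ`, the frozen Jacobian
`J(U⁰) = diag(c + κ_d(z)) − c·P` of the periodic Parareal residual is invertible, and
`‖J(U⁰)⁻¹ (J(U) − J(U⁰))‖₂ ≤ (L₂/c₁)·‖U − U⁰‖₂` holds for every `U ∈ ℝ^N`,
where `L₂ = κ₂ + L₁`. -/
theorem affine_covariant_lipschitz_model (κ : ℝ → ℝ) (hκdiff : Differentiable ℝ κ)
    (c₁ κ₂ L₁ : ℝ) (hc₁ : 0 < c₁) (hκ₂ : 0 ≤ κ₂) (hL₁ : 0 ≤ L₁)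
    (hκlb : ∀ t : ℝ, 0 ≤ t → c₁ ≤ κ t)
    (hmono : ∀ t s : ℝ, 0 ≤ t → 0 ≤ s → (κ t * t - κ s * s) * (t - s) ≥ c₁ * (t - s) ^ 2)
    (hbd : ∀ t : ℝ, 0 ≤ t → |deriv κ t| ≤ κ₂)
    (hg : ∀ t s : ℝ, 0 ≤ t → 0 ≤ s → |deriv κ t * t - deriv κ s * s| ≤ L₁ * |t - s|)
    (κd : ℝ → ℝ) (hκd : ∀ x : ℝ, κd x = deriv κ |x| * |x| + κ |x|)
    (L₂ : ℝ) (hL₂ : L₂ = κ₂ + L₁)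
    (N : ℕ) (hN : 2 ≤ N) (c : ℝ) (hc : 0 ≤ c)
    (b : Fin N → ℝ) (z : ℝ)
    (J : EuclideanSpace ℝ (Fin N) → Matrix (Fin N) (Fin N) ℝ)
    (hJ : ∀ U : EuclideanSpace ℝ (Fin N),
      J U = Matrix.diagonal (fun n => c + κd (U n - b n)) - c • cyclicShiftMatrixR N)
    (U0 : EuclideanSpace ℝ (Fin N)) (hU0 : ∀ n : Fin N, U0 n = z + b n) :
    IsUnit (J U0) ∧
      ∀ U : EuclideanSpace ℝ (Fin N),
        ‖Matrix.toEuclideanCLM (𝕜 := ℝ) ((J U0)⁻¹ * (J U - J U0))‖ ≤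
          L₂ / c₁ * ‖U - U0‖ := by
  haveI : NeZero N := ⟨by omega⟩
  have hL₂0 : 0 ≤ L₂ := hL₂ ▸ add_nonneg hκ₂ hL₁
  -- the lower bound c₁ ≤ κd z
  have hκdz : c₁ ≤ κd z := by
    rw [hκd]
    exact deriv_mul_add_lb κ hκdiff c₁ hmono |z| (abs_nonneg z)
  -- Lipschitz continuity of κd
  have hlip : ∀ x y : ℝ, |κd x - κd y| ≤ L₂ * |x - y| := by
    intro x y; rw [hL₂]; exact kd_lipschitz κ hκdiff κ₂ L₁ hκ₂ hL₁ hbd hg κd hκd x y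
  -- coordinate action of toEuclideanCLM
  have hact : ∀ (M : Matrix (Fin N) (Fin N) ℝ) (x : EuclideanSpace ℝ (Fin N)) (n : Fin N),
      (Matrix.toEuclideanCLM (𝕜 := ℝ) M) x n = (M *ᵥ (fun i => x i)) n := fun M x n => rfl
  -- the shift permutation
  set σ : Fin N → Fin N := fun n => ⟨(((n:ℕ):ZMod N) - 1).val, ZMod.val_lt _⟩ with hσdef
  have hcond : ∀ n k : Fin N, (((k : ℕ) : ZMod N) = ((n : ℕ) : ZMod N) - 1) ↔ k = σ n := by
    intro n k
    constructor
    · intro h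
      apply Fin.ext
      have h2 : (((k:ℕ):ZMod N)).val = (((n:ℕ):ZMod N) - 1).val := by rw [h]
      simpa [ZMod.val_natCast_of_lt k.isLt] using h2
    · rintro rfl
      exact ZMod.natCast_rightInverse _
  have hσinj : Function.Injective σ := by
    intro n m h
    have h1 := congrArg (fun k : Fin N => ((k : ℕ) : ZMod N)) h
    rw [show ((σ n : ℕ) : ZMod N) = ((n:ℕ):ZMod N) - 1 from ZMod.natCast_rightInverse _,
        show ((σ m : ℕ) : ZMod N) = ((m:ℕ):ZMod N) - 1 from ZMod.natCast_rightInverse _] at h1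
    have h2 : ((n:ℕ):ZMod N) = ((m:ℕ):ZMod N) := sub_left_inj.mp h1
    apply Fin.ext
    have h3 := congrArg ZMod.val h2
    simpa [ZMod.val_natCast_of_lt n.isLt, ZMod.val_natCast_of_lt m.isLt] using h3
  have hσbij : Function.Bijective σ := Finite.injective_iff_bijective.mp hσinj
  have hPmul : ∀ x : Fin N → ℝ, cyclicShiftMatrixR N *ᵥ x = fun n => x (σ n) := by
    intro x; funext n
    have hterm : ∀ k, cyclicShiftMatrixR N n k * x k = if k = σ n then x k else 0 := by
      intro k
      simp only [cyclicShiftMatrixR, Matrix.of_apply]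
      rw [if_congr (hcond n k) rfl rfl]
      split <;> simp
    calc (cyclicShiftMatrixR N *ᵥ x) n = ∑ k, cyclicShiftMatrixR N n k * x k := rfl
      _ = ∑ k, if k = σ n then x k else 0 := by simp_rw [hterm]
      _ = x (σ n) := by rw [Finset.sum_ite_eq' Finset.univ (σ n) x]; simp
  -- the frozen Jacobian
  have hU0z : ∀ n, U0 n - b n = z := fun n => by rw [hU0]; ring
  have hA : J U0 = Matrix.diagonal (fun _ => c + κd z) - c • cyclicShiftMatrixR N := by
    rw [hJ U0]
    have h : (fun n => c + κd (U0 n - b n)) = fun _ : Fin N => c + κd z := by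
      funext n; rw [hU0z n]
    rw [h]
  have ha0 : 0 ≤ c + κd z := add_nonneg hc (le_trans hc₁.le hκdz)
  -- lower bound for the frozen Jacobian
  have hTA : ∀ x : EuclideanSpace ℝ (Fin N),
      c₁ * ‖x‖ ≤ ‖(Matrix.toEuclideanCLM (𝕜 := ℝ) (J U0)) x‖ := by
    intro x
    set w : EuclideanSpace ℝ (Fin N) := (WithLp.equiv 2 (Fin N → ℝ)).symm (fun n => x (σ n))
      with hw
    have hwnorm : ‖w‖ = ‖x‖ := by
      rw [hw, EuclideanSpace.norm_eq, EuclideanSpace.norm_eq]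
      congr 1
      have hco : ∀ i, ‖(WithLp.equiv 2 (Fin N → ℝ)).symm (fun n => x (σ n)) i‖ ^ 2
          = ‖x (σ i)‖ ^ 2 := fun i => rfl
      rw [Finset.sum_congr rfl (fun i _ => hco i)]
      exact Equiv.sum_comp (Equiv.ofBijective σ hσbij) (fun i => ‖x i‖^2)
    have hTx : (Matrix.toEuclideanCLM (𝕜 := ℝ) (J U0)) x = (c + κd z) • x - c • w := by
      ext n
      rw [hact, hA, Matrix.sub_mulVec, Matrix.smul_mulVec, hPmul]
      have h1 : ((c + κd z) • x - c • w) n = (c + κd z) * x n - c * w n := by simp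
      rw [h1]
      have h2 : w n = x (σ n) := rfl
      rw [h2]
      simp [Matrix.mulVec_diagonal]
    rw [hTx]
    have hstep : (c + κd z) * ‖x‖ - c * ‖x‖ ≤ ‖(c + κd z) • x - c • w‖ := by
      calc (c + κd z) * ‖x‖ - c * ‖x‖ = ‖(c + κd z) • x‖ - ‖c • w‖ := by
            rw [norm_smul, norm_smul, Real.norm_eq_abs, Real.norm_eq_abs,
              abs_of_nonneg ha0, abs_of_nonneg hc, hwnorm]
        _ ≤ ‖(c + κd z) • x - c • w‖ := norm_sub_norm_le _ _
    have : c₁ * ‖x‖ ≤ (c + κd z) * ‖x‖ - c * ‖x‖ := by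
      have := mul_le_mul_of_nonneg_right hκdz (norm_nonneg x)
      nlinarith
    linarith
  -- invertibility
  have hunit : IsUnit (J U0) := by
    rw [← Matrix.mulVec_injective_iff_isUnit]
    intro x y hxy
    have hkey : Matrix.toEuclideanCLM (𝕜 := ℝ) (J U0) ((WithLp.equiv 2 _).symm x)
        = Matrix.toEuclideanCLM (𝕜 := ℝ) (J U0) ((WithLp.equiv 2 _).symm y) := by
      ext n
      exact congrFun hxy n
    have h0 : c₁ * ‖(WithLp.equiv 2 (Fin N → ℝ)).symm x - (WithLp.equiv 2 _).symm y‖ ≤ 0 := by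
      have h1 := hTA ((WithLp.equiv 2 (Fin N → ℝ)).symm x - (WithLp.equiv 2 _).symm y)
      rw [map_sub, hkey, sub_self, norm_zero] at h1
      exact h1
    have h2 : (WithLp.equiv 2 (Fin N → ℝ)).symm x - (WithLp.equiv 2 _).symm y = 0 := by
      have := norm_nonneg ((WithLp.equiv 2 (Fin N → ℝ)).symm x - (WithLp.equiv 2 _).symm y)
      have hn : ‖(WithLp.equiv 2 (Fin N → ℝ)).symm x - (WithLp.equiv 2 _).symm y‖ = 0 := by
        nlinarith
      exact norm_eq_zero.mp hn
    have h3 : (WithLp.equiv 2 (Fin N → ℝ)).symm x = (WithLp.equiv 2 (Fin N → ℝ)).symm y :=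
      sub_eq_zero.mp h2
    exact (WithLp.equiv 2 (Fin N → ℝ)).symm.injective h3
  refine ⟨hunit, fun U => ?_⟩
  -- bound on the inverse
  have hTinv : ∀ y : EuclideanSpace ℝ (Fin N),
      ‖(Matrix.toEuclideanCLM (𝕜 := ℝ) (J U0)⁻¹) y‖ ≤ c₁⁻¹ * ‖y‖ := by
    intro y
    have h1 : Matrix.toEuclideanCLM (𝕜 := ℝ) (J U0)
        (Matrix.toEuclideanCLM (𝕜 := ℝ) (J U0)⁻¹ y) = y := by
      rw [← ContinuousLinearMap.mul_apply, ← _root_.map_mul,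
        Matrix.mul_nonsing_inv (J U0) ((Matrix.isUnit_iff_isUnit_det (J U0)).mp hunit),
        _root_.map_one, ContinuousLinearMap.one_apply]
    have h2 := hTA (Matrix.toEuclideanCLM (𝕜 := ℝ) (J U0)⁻¹ y)
    rw [h1] at h2
    calc ‖(Matrix.toEuclideanCLM (𝕜 := ℝ) (J U0)⁻¹) y‖
        = c₁⁻¹ * (c₁ * ‖(Matrix.toEuclideanCLM (𝕜 := ℝ) (J U0)⁻¹) y‖) := by
          field_simp
      _ ≤ c₁⁻¹ * ‖y‖ := mul_le_mul_of_nonneg_left h2 (by positivity)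
  -- the difference is diagonal
  have hD : J U - J U0 = Matrix.diagonal (fun n => κd (U n - b n) - κd z) := by
    rw [hJ U, hA, sub_sub_sub_cancel_right, Matrix.diagonal_sub]
    congr 1
    funext n
    ring
  set M : ℝ := L₂ * ‖U - U0‖ with hM
  have hM0 : 0 ≤ M := mul_nonneg hL₂0 (norm_nonneg _)
  have hdbound : ∀ n, |κd (U n - b n) - κd z| ≤ M := by
    intro n
    calc |κd (U n - b n) - κd z| ≤ L₂ * |U n - b n - z| := hlip _ _
      _ = L₂ * |(U - U0) n| := by
          congr 1
          have h1 : (U - U0) n = U n - U0 n := rfl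
          rw [h1, hU0 n]
          congr 1
          ring
      _ ≤ L₂ * ‖U - U0‖ := mul_le_mul_of_nonneg_left (coord_le_norm (U - U0) n) hL₂0
  -- bound on the diagonal difference
  have hDx : ∀ x : EuclideanSpace ℝ (Fin N),
      ‖(Matrix.toEuclideanCLM (𝕜 := ℝ) (J U - J U0)) x‖ ≤ M * ‖x‖ := by
    intro x
    have hterm : ∀ n : Fin N,
        ‖(Matrix.toEuclideanCLM (𝕜 := ℝ) (J U - J U0)) x n‖^2 ≤ M^2 * ‖x n‖^2 := by
      intro n
      have h1 : (Matrix.toEuclideanCLM (𝕜 := ℝ) (J U - J U0)) x n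
          = (κd (U n - b n) - κd z) * x n := by
        rw [hact, hD]
        simp [Matrix.mulVec_diagonal]
      rw [h1, Real.norm_eq_abs, Real.norm_eq_abs, abs_mul]
      have h2 := hdbound n
      have h3 : |κd (U n - b n) - κd z|^2 ≤ M^2 := by
        nlinarith [abs_nonneg (κd (U n - b n) - κd z)]
      calc (|κd (U n - b n) - κd z| * |x n|)^2
          = |κd (U n - b n) - κd z|^2 * |x n|^2 := by ring
        _ ≤ M^2 * |x n|^2 := mul_le_mul_of_nonneg_right h3 (sq_nonneg _)
    calc ‖(Matrix.toEuclideanCLM (𝕜 := ℝ) (J U - J U0)) x‖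
        = Real.sqrt (∑ n, ‖(Matrix.toEuclideanCLM (𝕜 := ℝ) (J U - J U0)) x n‖^2) :=
          EuclideanSpace.norm_eq _
      _ ≤ Real.sqrt (∑ n, M^2 * ‖x n‖^2) :=
          Real.sqrt_le_sqrt (Finset.sum_le_sum fun n _ => hterm n)
      _ = Real.sqrt (M^2) * Real.sqrt (∑ n, ‖x n‖^2) := by
          rw [← Finset.mul_sum, Real.sqrt_mul (sq_nonneg M)]
      _ = M * ‖x‖ := by rw [Real.sqrt_sq hM0, EuclideanSpace.norm_eq]
  -- conclusion via the operator norm bound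
  refine ContinuousLinearMap.opNorm_le_bound _
    (mul_nonneg (div_nonneg hL₂0 hc₁.le) (norm_nonneg _)) (fun x => ?_)
  calc ‖(Matrix.toEuclideanCLM (𝕜 := ℝ) ((J U0)⁻¹ * (J U - J U0))) x‖
      = ‖(Matrix.toEuclideanCLM (𝕜 := ℝ) (J U0)⁻¹)
          ((Matrix.toEuclideanCLM (𝕜 := ℝ) (J U - J U0)) x)‖ := by
        rw [_root_.map_mul]; rfl
    _ ≤ c₁⁻¹ * ‖(Matrix.toEuclideanCLM (𝕜 := ℝ) (J U - J U0)) x‖ := hTinv _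
    _ ≤ c₁⁻¹ * (M * ‖x‖) := mul_le_mul_of_nonneg_left (hDx x) (by positivity)
    _ = L₂ / c₁ * ‖U - U0‖ * ‖x‖ := by rw [hM, div_eq_inv_mul]; ring
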